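/- Let ω ∈ ℝ, let V : ℝ → ℝ and H : ℝ → ℂ be continuous, and let u : ℝ → ℂ be a C² solution of u''(s) − V(s)·u(s) = H(s) on ℝ. Assume that there exists c ∈ ℂ with u(s) − c·e^{−iωs} → 0 and u'(s) + iω·c·e^{−iωs} → 0 as s → −∞, that there exists ε > 0 with e^{εs}·(|u(s)| + |u'(s)|) → 0 as s → +∞, and that s ↦ Im(H(s)·conj(u(s))) is absolutely integrable on ℝ. Then ω·|c|² = ∫_{−∞}^{∞} Im(H(s)·conj(u(s))) ds. -/

import Mathlib

open MeasureTheory Filter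

/-- Energy identity for weakly outgoing solutions of `u'' − Vu = H` with real
potential `V`: if `u ∼ c·e^{−iωs}` (together with its derivative) as `s → −∞` and
`u` decays exponentially as `s → +∞`, then `ω·|c|² = ∫ Im(H·conj u)`. -/
theorem statement2 (ω : ℝ) (V : ℝ → ℝ) (H u : ℝ → ℂ) (c : ℂ)
    (hV : Continuous V) (hH : Continuous H)
    (hu : ContDiff ℝ 2 u)
    (heq : ∀ s : ℝ, deriv (deriv u) s - (V s : ℂ) * u s = H s)
    (hbot : Tendsto (fun s : ℝ => u s - c * Complex.exp (-Complex.I * (ω : ℂ) * (s : ℂ)))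
      atBot (nhds 0))
    (hbot' : Tendsto (fun s : ℝ =>
        deriv u s + Complex.I * (ω : ℂ) * c * Complex.exp (-Complex.I * (ω : ℂ) * (s : ℂ)))
      atBot (nhds 0))
    (htop : ∃ ε : ℝ, 0 < ε ∧
      Tendsto (fun s : ℝ => Real.exp (ε * s) * (‖u s‖ + ‖deriv u s‖)) atTop (nhds 0))
    (hint : Integrable (fun s : ℝ => (H s * (starRingEnd ℂ) (u s)).im)) :
    ω * ‖c‖ ^ 2 = ∫ s : ℝ, (H s * (starRingEnd ℂ) (u s)).im := by
  have hud : Differentiable ℝ u := hu.differentiable (by norm_num)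
  have hu2 : ContDiff ℝ 1 (deriv u) := by
    have := (contDiff_succ_iff_deriv (n := 1)).mp (by exact_mod_cast hu)
    exact this.2.2
  have hud' : Differentiable ℝ (deriv u) := hu2.differentiable (by norm_num)
  set e : ℝ → ℂ := fun s => Complex.exp (-Complex.I * (ω : ℂ) * (s : ℂ)) with he
  set W : ℝ → ℝ := fun s => (deriv u s * (starRingEnd ℂ) (u s)).im with hW
  -- derivative of W
  have hWd : ∀ s : ℝ, HasDerivAt W ((H s * (starRingEnd ℂ) (u s)).im) s := by
    intro s
    have h1 : HasDerivAt u (deriv u s) s := (hud s).hasDerivAt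
    have h2 : HasDerivAt (deriv u) (deriv (deriv u) s) s := (hud' s).hasDerivAt
    have hc : HasDerivAt (fun t => (starRingEnd ℂ) (u t)) ((starRingEnd ℂ) (deriv u s)) s := by
      simpa [Function.comp_def] using (Complex.conjCLE.hasFDerivAt.comp_hasDerivAt s h1)
    have hm : HasDerivAt (fun t => deriv u t * (starRingEnd ℂ) (u t))
        (deriv (deriv u) s * (starRingEnd ℂ) (u s)
          + deriv u s * (starRingEnd ℂ) (deriv u s)) s := h2.mul hc
    have him : HasDerivAt W
        ((deriv (deriv u) s * (starRingEnd ℂ) (u s)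
          + deriv u s * (starRingEnd ℂ) (deriv u s)).im) s := by
      simpa [Function.comp_def, hW] using (Complex.imCLM.hasFDerivAt.comp_hasDerivAt s hm)
    convert him using 1
    have hsecond : deriv (deriv u) s = (V s : ℂ) * u s + H s := by
      have := heq s; linear_combination this
    rw [hsecond, add_mul, mul_assoc, Complex.mul_conj, Complex.mul_conj]
    simp [← Complex.ofReal_mul]
  -- limit at +∞
  have hWtop : Tendsto W atTop (nhds 0) := by
    obtain ⟨ε, hε, hdecay⟩ := htop
    have hsum : Tendsto (fun s : ℝ => ‖u s‖ + ‖deriv u s‖) atTop (nhds 0) := by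
      apply squeeze_zero' (Eventually.of_forall fun s => by positivity)
        ?_ hdecay
      filter_upwards [eventually_ge_atTop (0:ℝ)] with s hs
      exact le_mul_of_one_le_left (by positivity) (Real.one_le_exp (by positivity))
    have hu0 : Tendsto u atTop (nhds 0) := by
      rw [tendsto_zero_iff_norm_tendsto_zero]
      exact squeeze_zero (fun s => norm_nonneg _) (fun s => le_add_of_nonneg_right (norm_nonneg _))
        hsum
    have hu0' : Tendsto (deriv u) atTop (nhds 0) := by
      rw [tendsto_zero_iff_norm_tendsto_zero]
      exact squeeze_zero (fun s => norm_nonneg _) (fun s => le_add_of_nonneg_left (norm_nonneg _))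
        hsum
    have : Tendsto (fun s => deriv u s * (starRingEnd ℂ) (u s)) atTop (nhds 0) := by
      simpa using hu0'.mul ((Complex.continuous_conj.tendsto 0).comp hu0)
    exact (Complex.continuous_im.tendsto 0).comp this
  -- limit at −∞
  have hWbot : Tendsto W atBot (nhds (-(ω * ‖c‖ ^ 2))) := by
    set A : ℝ → ℂ := fun s => u s - c * e s with hA
    set B : ℝ → ℂ := fun s => deriv u s + Complex.I * (ω : ℂ) * c * e s with hB
    have hnorm : ∀ s : ℝ, ‖e s‖ = 1 := by
      intro s
      rw [he]; simp only []
      rw [Complex.norm_exp]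
      norm_num [Complex.mul_re]
    have hee : ∀ s : ℝ, e s * (starRingEnd ℂ) (e s) = 1 := by
      intro s
      rw [he]
      simp only [← Complex.exp_conj, ← Complex.exp_add]
      rw [show (-Complex.I * (ω : ℂ) * (s : ℂ)) +
        (starRingEnd ℂ) (-Complex.I * (ω : ℂ) * (s : ℂ)) = 0 by
          simp only [map_mul, map_neg, Complex.conj_I, Complex.conj_ofReal]; ring,
        Complex.exp_zero]
    have expand : ∀ s : ℝ, deriv u s * (starRingEnd ℂ) (u s) =
        B s * (starRingEnd ℂ) (A s) + B s * ((starRingEnd ℂ) c * (starRingEnd ℂ) (e s))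
          + (-(Complex.I * (ω : ℂ) * c) * e s) * (starRingEnd ℂ) (A s)
          - Complex.I * (ω : ℂ) * (c * (starRingEnd ℂ) c) := by
      intro s
      have h1 := hee s
      have hconj : (starRingEnd ℂ) (u s)
          = (starRingEnd ℂ) (A s) + (starRingEnd ℂ) c * (starRingEnd ℂ) (e s) := by
        rw [hA]; simp only [map_sub, map_mul]; ring
      have hder : deriv u s = B s - Complex.I * (ω : ℂ) * c * e s := by rw [hB]; ring
      rw [hconj, hder]
      linear_combination (-(Complex.I * (ω : ℂ) * c * (starRingEnd ℂ) c)) * h1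
    have hA0 : Tendsto A atBot (nhds 0) := hbot
    have hB0 : Tendsto B atBot (nhds 0) := hbot'
    have hcA0 : Tendsto (fun s => (starRingEnd ℂ) (A s)) atBot (nhds 0) := by
      simpa [Function.comp_def] using (Complex.continuous_conj.tendsto 0).comp hA0
    have t1 : Tendsto (fun s => B s * (starRingEnd ℂ) (A s)) atBot (nhds 0) := by
      simpa using hB0.mul hcA0
    have t2 : Tendsto (fun s => B s * ((starRingEnd ℂ) c * (starRingEnd ℂ) (e s)))
        atBot (nhds 0) := by
      apply hB0.zero_mul_isBoundedUnder_le
      refine isBoundedUnder_of ⟨‖c‖, fun s => ?_⟩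
      have : ‖(starRingEnd ℂ) (e s)‖ = 1 := by
        rw [Complex.norm_conj]; exact hnorm s
      simp only [Function.comp_apply]
      rw [norm_mul, this, mul_one, Complex.norm_conj]
    have t3 : Tendsto (fun s => (-(Complex.I * (ω : ℂ) * c) * e s) * (starRingEnd ℂ) (A s))
        atBot (nhds 0) := by
      have := hcA0.zero_mul_isBoundedUnder_le (g := fun s => -(Complex.I * (ω : ℂ) * c) * e s)
        (isBoundedUnder_of ⟨‖Complex.I * (ω : ℂ) * c‖, fun s => by
          have : ‖e s‖ = 1 := by exact hnorm s
          simp only [Function.comp_apply]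
          rw [norm_mul, this, mul_one, norm_neg]⟩)
      simpa [mul_comm] using this
    have tprod : Tendsto (fun s => deriv u s * (starRingEnd ℂ) (u s)) atBot
        (nhds (0 + 0 + 0 - Complex.I * (ω : ℂ) * (c * (starRingEnd ℂ) c))) := by
      apply Tendsto.congr (fun s => (expand s).symm)
      exact ((t1.add t2).add t3).sub tendsto_const_nhds
    have him := (Complex.continuous_im.tendsto _).comp tprod
    have : (0 + 0 + 0 - Complex.I * (ω : ℂ) * (c * (starRingEnd ℂ) c)).im
        = -(ω * ‖c‖ ^ 2) := by
      rw [Complex.mul_conj, Complex.normSq_eq_norm_sq]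
      simp [Complex.mul_im]
      left
      norm_cast
    rw [← this]
    exact him
  have hkey := integral_of_hasDerivAt_of_tendsto hWd hint hWbot hWtop
  rw [hkey]; ring
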